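/- Let q = 7^a, let K be an algebraic closure of ℚ_7 with valuation ord_7 normalized by ord_7(7) = 1, and ord_q := (1/a)·ord_7. Let α_1, α_2, α_3, α_4 ∈ K be nonzero and set P(T) = ∏_{i=1}^4 (1 − α_i T) = 1 + b_1 T + b_2 T^2 + b_3 T^3 + b_4 T^4. Assume: (i) the multiset {α_1, α_2, α_3, α_4} is stable under α ↦ q/α (so the Newton polygon of P with respect to ord_q is symmetric about slope 1/2); (ii) every vertex of the Newton polygon of P (the lower convex hull of the points (n, ord_q b_n), 0 ≤ n ≤ 4, with b_0 = 1) has ordinate an integer multiple of 1/6; (iii) ord_q(b_1) > 5/12 and ord_q(b_2) > 5/6. Then ord_q(α_i) = 1/2 for all i = 1, 2, 3, 4. -/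

import Mathlib

/-!
STATEMENT 12 (Proposition 3.3, final Newton-polygon step for `x⁵ + c·x²` over `F_{7^a}`):
Let `q = 7^a`, `K` an algebraic closure of `ℚ_7` with valuation `ord_7` (`ord_7 7 = 1`)
and `ord_q = (1/a)·ord_7`.  Let `α₁,…,α₄ ∈ K` be nonzero,
`P(T) = ∏ (1 − αᵢT) = 1 + b₁T + ⋯ + b₄T⁴`.  Assume:
(i) the multiset `{α₁,…,α₄}` is stable under `α ↦ q/α`;
(ii) every vertex of the Newton polygon of `P` (lower convex hull of `(n, ord_q bₙ)`,
`0 ≤ n ≤ 4`) has ordinate an integer multiple of `1/6`;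
(iii) `ord_q b₁ > 5/12` and `ord_q b₂ > 5/6`.
Then `ord_q αᵢ = 1/2` for all `i`.

The Newton polygon is encoded through its value function `npVal` (the sup of the
values at `x` of all affine functions lying below all the points `(n, pts n)`), and
`(n, pts n)` is a *vertex* iff some affine function below all the points touches the
polygon at `n` and is strictly below it at every other abscissa `k ≤ d`.
-/

open scoped BigOperators

local instance fact7 : Fact (Nat.Prime 7) := ⟨by norm_num⟩

/-- Value at `x` of the lower convex hull (Newton polygon) of the points
`(n, pts n)`, `0 ≤ n ≤ d`, where `pts n ∈ ℝ ∪ {+∞}`. -/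
noncomputable def npVal (d : ℕ) (pts : ℕ → WithTop ℝ) (x : ℝ) : ℝ :=
  sSup {y : ℝ | ∃ m c : ℝ,
    (∀ n ∈ Finset.range (d + 1), ((m * n + c : ℝ) : WithTop ℝ) ≤ pts n) ∧
    y = m * x + c}

/-- `(n, npVal d pts n)` is a vertex of the Newton polygon of the points
`(k, pts k)`, `0 ≤ k ≤ d`. -/
def IsNPVertex (d : ℕ) (pts : ℕ → WithTop ℝ) (n : ℕ) : Prop :=
  n ≤ d ∧ ∃ m c : ℝ,
    (∀ k ∈ Finset.range (d + 1), ((m * k + c : ℝ) : WithTop ℝ) ≤ pts k) ∧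
    (m * n + c : ℝ) = npVal d pts n ∧
    ∀ k ≤ d, k ≠ n → (m * k + c : ℝ) < npVal d pts k

private lemma np_helper (pts : ℕ → WithTop ℝ)
    (h0 : pts 0 = ((0:ℝ) : WithTop ℝ)) (p4 : ℝ) (h4 : pts 4 = ((p4:ℝ) : WithTop ℝ))
    (n : ℕ) (hn1 : 1 ≤ n) (hn : n ≤ 3) (mlo mhi P : ℝ) (hm : mlo < mhi)
    (hbelow : ∀ m, mlo ≤ m → m ≤ mhi → ∀ k : ℕ, k ≤ 4 →
      ((m * ((k:ℝ) - n) + P : ℝ) : WithTop ℝ) ≤ pts k)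
    (hP : pts n = ((P:ℝ) : WithTop ℝ)) :
    IsNPVertex 4 pts n ∧ npVal 4 pts (n : ℝ) = P := by
  set S : ℝ → Set ℝ := fun x => {y : ℝ | ∃ m c : ℝ,
    (∀ k ∈ Finset.range (4 + 1), ((m * k + c : ℝ) : WithTop ℝ) ≤ pts k) ∧
    y = m * x + c} with hS
  have hnp : ∀ x : ℝ, npVal 4 pts x = sSup (S x) := fun _ => rfl
  have hbel : ∀ m, mlo ≤ m → m ≤ mhi →
      ∀ k ∈ Finset.range (4 + 1), ((m * k + (P - m * n) : ℝ) : WithTop ℝ) ≤ pts k := by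
    intro m h1 h2 k hk
    have hk4 : k ≤ 4 := by
      have := Finset.mem_range.mp hk; omega
    have h := hbelow m h1 h2 k hk4
    have e : m * (k:ℝ) + (P - m * n) = m * ((k:ℝ) - n) + P := by ring
    rw [e]; exact h
  have hmem : ∀ m, mlo ≤ m → m ≤ mhi → ∀ x : ℝ, (m * x + (P - m * n)) ∈ S x := by
    intro m h1 h2 x
    exact ⟨m, P - m * n, hbel m h1 h2, rfl⟩
  have hbdd : ∀ x : ℝ, 0 ≤ x → x ≤ 4 → BddAbove (S x) := by
    intro x hx0 hx4
    refine ⟨(x/4) * p4, ?_⟩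
    rintro y ⟨m, c, hmc, rfl⟩
    have hc : c ≤ 0 := by
      have h := hmc 0 (by simp)
      rw [h0] at h
      have h' : (m * (0:ℕ) + c : ℝ) ≤ 0 := WithTop.coe_le_coe.mp h
      simpa using h'
    have h4m : 4 * m + c ≤ p4 := by
      have h := hmc 4 (by simp)
      rw [h4] at h
      have h' : (m * (4:ℕ) + c : ℝ) ≤ p4 := WithTop.coe_le_coe.mp h
      push_cast at h'; linarith
    have t1 : (x/4) * (4*m+c) ≤ (x/4) * p4 :=
      mul_le_mul_of_nonneg_left h4m (by linarith)
    have t2 : (1 - x/4) * c ≤ 0 :=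
      mul_nonpos_of_nonneg_of_nonpos (by linarith) hc
    have e : m * x + c = (x/4) * (4*m+c) + (1 - x/4) * c := by ring
    rw [e]; linarith
  have hnr0 : (0:ℝ) ≤ (n:ℝ) := by positivity
  have hnr4 : (n:ℝ) ≤ 4 := by
    have : (n:ℝ) ≤ 3 := by exact_mod_cast hn
    linarith
  have hvaln : npVal 4 pts (n:ℝ) = P := by
    rw [hnp]
    apply le_antisymm
    · apply csSup_le ⟨_, hmem mlo le_rfl hm.le (n:ℝ)⟩
      rintro y ⟨m, c, hmc, rfl⟩
      have h := hmc n (by simp [Finset.mem_range]; omega)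
      rw [hP] at h
      exact WithTop.coe_le_coe.mp h
    · have h := le_csSup (hbdd (n:ℝ) hnr0 hnr4) (hmem mlo le_rfl hm.le (n:ℝ))
      have e : mlo * (n:ℝ) + (P - mlo * n) = P := by ring
      rw [e] at h; exact h
  set m₀ : ℝ := (mlo + mhi) / 2 with hm₀
  have hm₀lo : mlo < m₀ := by rw [hm₀]; linarith
  have hm₀hi : m₀ < mhi := by rw [hm₀]; linarith
  refine ⟨⟨by omega, m₀, P - m₀ * n, hbel m₀ hm₀lo.le hm₀hi.le, ?_, ?_⟩, hvaln⟩
  · rw [hvaln]; ring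
  · intro k hk hkn
    have hkr0 : (0:ℝ) ≤ (k:ℝ) := by positivity
    have hkr4 : (k:ℝ) ≤ 4 := by exact_mod_cast hk
    rw [hnp]
    rcases lt_or_gt_of_ne hkn with hlt | hgt
    · have hkr : (k:ℝ) < n := by exact_mod_cast hlt
      have hw := le_csSup (hbdd (k:ℝ) hkr0 hkr4) (hmem mlo le_rfl hm.le (k:ℝ))
      have : m₀ * (k:ℝ) + (P - m₀ * n) < mlo * (k:ℝ) + (P - mlo * n) := by nlinarith
      linarith
    · have hkr : (n:ℝ) < k := by exact_mod_cast hgt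
      have hw := le_csSup (hbdd (k:ℝ) hkr0 hkr4) (hmem mhi hm.le le_rfl (k:ℝ))
      have : m₀ * (k:ℝ) + (P - m₀ * n) < mhi * (k:ℝ) + (P - mhi * n) := by nlinarith
      linarith

section OQ
variable {K : Type*} [Field K] (oq : K → WithTop ℝ)

private lemma wmap_add (a : ℕ) (x y : WithTop ℝ) :
    WithTop.map (fun t => t / (a:ℝ)) (x + y)
      = WithTop.map (fun t => t / (a:ℝ)) x + WithTop.map (fun t => t / (a:ℝ)) y := by
  cases x <;> cases y <;> simp [add_div, ← WithTop.coe_add]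

private lemma wmap_mono (a : ℕ) {x y : WithTop ℝ} (h : x ≤ y) :
    WithTop.map (fun t => t / (a:ℝ)) x ≤ WithTop.map (fun t => t / (a:ℝ)) y := by
  cases x with
  | top => cases y with
    | top => simp
    | coe q => simp at h
  | coe p => cases y with
    | top => simp
    | coe q =>
      simp only [WithTop.map_coe, WithTop.coe_le_coe] at h ⊢
      rcases Nat.eq_zero_or_pos a with h0 | hpos
      · simp [h0]
      · have ha : (0:ℝ) < a := by exact_mod_cast hpos
        gcongr

variable (oq0 : ∀ x : K, oq x = ⊤ ↔ x = 0)
  (oqmul : ∀ x y : K, oq (x*y) = oq x + oq y)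
  (oqmin : ∀ x y : K, min (oq x) (oq y) ≤ oq (x + y))

include oq0 oqmul in
private lemma oq_one : oq 1 = ((0:ℝ) : WithTop ℝ) := by
  have h := oqmul 1 1
  rw [mul_one] at h
  cases hv : oq (1:K) with
  | top => exact absurd ((oq0 1).mp hv) one_ne_zero
  | coe r =>
    rw [hv] at h
    have hr : r = r + r := by exact_mod_cast h
    have hr0 : r = 0 := by linarith
    rw [hr0]

include oq0 oqmul in
private lemma oq_neg : ∀ x : K, oq (-x) = oq x := by
  have hm1 : oq (-1 : K) = ((0:ℝ) : WithTop ℝ) := by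
    have h := oqmul (-1) (-1)
    rw [neg_mul_neg, one_mul, oq_one oq oq0 oqmul] at h
    cases hv : oq (-1 : K) with
    | top =>
      have : (-1 : K) = 0 := (oq0 _).mp hv
      simpa using this
    | coe r =>
      rw [hv] at h
      have hr : (0:ℝ) = r + r := by exact_mod_cast h
      have hr0 : r = 0 := by linarith
      rw [hr0]
  intro x
  calc oq (-x) = oq ((-1) * x) := by rw [neg_one_mul]
    _ = oq (-1) + oq x := oqmul _ _
    _ = oq x := by rw [hm1]; simp

include oqmin in
private lemma oq_add_ge {c : WithTop ℝ} {x y : K} (hx : c ≤ oq x) (hy : c ≤ oq y) :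
    c ≤ oq (x + y) :=
  le_trans (le_min hx hy) (oqmin x y)

include oq0 oqmul oqmin in
private lemma oq_dom {x y : K} (h : oq x < oq y) : oq (x + y) = oq x := by
  refine le_antisymm ?_ ?_
  · have h1 : min (oq (x+y)) (oq (-y)) ≤ oq ((x+y) + -y) := oqmin _ _
    have h2 : (x + y) + -y = x := by ring
    rw [h2, oq_neg oq oq0 oqmul] at h1
    rcases min_le_iff.mp h1 with h3 | h3
    · exact h3
    · exact absurd h (not_lt.mpr h3)
  · have := oqmin x y
    rwa [min_eq_left h.le] at this

include oq0 oqmul in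
private lemma oq_pow {x : K} {r : ℝ} (hx : oq x = ((r:ℝ) : WithTop ℝ)) (k : ℕ) :
    oq (x ^ k) = (((k : ℝ) * r : ℝ) : WithTop ℝ) := by
  induction k with
  | zero =>
    rw [pow_zero, oq_one oq oq0 oqmul]
    norm_num
  | succ k ih =>
    rw [pow_succ, oqmul, ih, hx, ← WithTop.coe_add]
    congr 1
    push_cast
    ring
end OQ

open Polynomial in
private lemma coeff_explicit {R : Type*} [CommRing R] (e1 e2 e3 e4 : R) :
    (C 1 + C e1 * X + C e2 * X^2 + C e3 * X^3 + C e4 * X^4).coeff 0 = 1 ∧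
    (C 1 + C e1 * X + C e2 * X^2 + C e3 * X^3 + C e4 * X^4).coeff 1 = e1 ∧
    (C 1 + C e1 * X + C e2 * X^2 + C e3 * X^3 + C e4 * X^4).coeff 2 = e2 ∧
    (C 1 + C e1 * X + C e2 * X^2 + C e3 * X^3 + C e4 * X^4).coeff 3 = e3 ∧
    (C 1 + C e1 * X + C e2 * X^2 + C e3 * X^3 + C e4 * X^4).coeff 4 = e4 := by
  refine ⟨?_, ?_, ?_, ?_, ?_⟩ <;>
    simp [coeff_add, coeff_C_mul, coeff_X_pow, coeff_one, coeff_X]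

set_option maxHeartbeats 2000000 in
open Polynomial in
private theorem aux_sorted
    (v : AlgebraicClosure ℚ_[7] → WithTop ℝ)
    (hv0 : ∀ x, v x = ⊤ ↔ x = 0)
    (hv_mul : ∀ x y, v (x * y) = v x + v y)
    (hv_add : ∀ x y, min (v x) (v y) ≤ v (x + y))
    (hv_ext : ∀ x : ℚ_[7], x ≠ 0 →
      v (algebraMap ℚ_[7] (AlgebraicClosure ℚ_[7]) x) = ((x.valuation : ℝ) : WithTop ℝ))
    (a : ℕ) (ha : 0 < a)
    (α : Fin 4 → AlgebraicClosure ℚ_[7]) (hα : ∀ i, α i ≠ 0)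
    (ordq : AlgebraicClosure ℚ_[7] → WithTop ℝ)
    (hordq : ∀ x, ordq x = WithTop.map (fun t => t / (a : ℝ)) (v x))
    (b : ℕ → AlgebraicClosure ℚ_[7])
    (hb : ∀ n, b n =
      (∏ i, (1 - Polynomial.C (α i) * Polynomial.X)).coeff n)
    (hsym : (Finset.univ.val.map α).map
        (fun x => ((7 : AlgebraicClosure ℚ_[7]) ^ a) / x) = Finset.univ.val.map α)
    (hvert : ∀ n : ℕ, IsNPVertex 4 (fun k => ordq (b k)) n →
      ∃ z : ℤ, npVal 4 (fun k => ordq (b k)) (n : ℝ) = (z : ℝ) / 6)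
    (hb1 : ((5 / 12 : ℝ) : WithTop ℝ) < ordq (b 1))
    (hb2 : ((5 / 6 : ℝ) : WithTop ℝ) < ordq (b 2))
    (hmono : Monotone fun i => (v (α i)).untopD 0) :
    ∀ i, ordq (α i) = ((1 / 2 : ℝ) : WithTop ℝ) := by
  have ha' : (0:ℝ) < a := by exact_mod_cast ha
  -- ordq is a valuation
  have oq0 : ∀ x, ordq x = ⊤ ↔ x = 0 := by
    intro x
    rw [hordq]
    constructor
    · intro h
      cases hx : v x with
      | top => exact (hv0 x).mp hx
      | coe r => rw [hx] at h; simp [WithTop.map_coe] at h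
    · intro h
      rw [(hv0 x).mpr h]; rfl
  have oqmul : ∀ x y, ordq (x*y) = ordq x + ordq y := by
    intro x y
    rw [hordq, hordq, hordq, hv_mul]
    exact wmap_add a _ _
  have oqmin : ∀ x y, min (ordq x) (ordq y) ≤ ordq (x + y) := by
    intro x y
    rw [hordq, hordq, hordq]
    refine le_trans ?_ (wmap_mono a (hv_add x y))
    rcases le_total (v x) (v y) with h | h
    · rw [min_eq_left h]; exact min_le_left _ _
    · rw [min_eq_right h]; exact min_le_right _ _
  -- the slopes
  have hwex : ∀ i, ∃ r : ℝ, v (α i) = (r : WithTop ℝ) := by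
    intro i
    cases hx : v (α i) with
    | top => exact absurd ((hv0 _).mp hx) (hα i)
    | coe r => exact ⟨r, rfl⟩
  choose w hw using hwex
  set s : Fin 4 → ℝ := fun i => w i / a with hsdef
  have hs : ∀ i, ordq (α i) = ((s i : ℝ) : WithTop ℝ) := by
    intro i
    rw [hordq, hw i]
    rfl
  have hmono' : ∀ i j : Fin 4, i ≤ j → s i ≤ s j := by
    intro i j hij
    have h := hmono hij
    simp only [hw i, hw j, WithTop.untopD_coe] at h
    show w i / (a:ℝ) ≤ w j / (a:ℝ)
    gcongr
  have hs01 : s 0 ≤ s 1 := hmono' 0 1 (by decide)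
  have hs12 : s 1 ≤ s 2 := hmono' 1 2 (by decide)
  have hs23 : s 2 ≤ s 3 := hmono' 2 3 (by decide)
  have hs0le : ∀ i, s 0 ≤ s i := fun i => hmono' 0 i (Fin.zero_le i)
  -- symmetry
  have h7K : v (7 : AlgebraicClosure ℚ_[7]) = ((1:ℝ) : WithTop ℝ) := by
    have h7 : (7:ℚ_[7]) ≠ 0 := by norm_num
    have h := hv_ext 7 h7
    rw [map_ofNat] at h
    have hval : ((7:ℚ_[7])).valuation = 1 := by exact_mod_cast (@Padic.valuation_p 7 _)
    rw [h, hval]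
    norm_num
  have h7q : ordq (7 : AlgebraicClosure ℚ_[7]) = ((1 / a : ℝ) : WithTop ℝ) := by
    rw [hordq, h7K]
    simp [WithTop.map_coe, one_div]
  have hq1 : ordq ((7 : AlgebraicClosure ℚ_[7])^a) = ((1:ℝ) : WithTop ℝ) := by
    rw [oq_pow ordq oq0 oqmul h7q a]
    congr 1
    field_simp
  have hinv : ∀ i, ordq (α i)⁻¹ = ((-(s i) : ℝ) : WithTop ℝ) := by
    intro i
    have h := oqmul (α i) (α i)⁻¹
    rw [mul_inv_cancel₀ (hα i), oq_one ordq oq0 oqmul, hs i] at h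
    cases hv' : ordq (α i)⁻¹ with
    | top => rw [hv'] at h; simp at h
    | coe r =>
      rw [hv'] at h
      have h1 : (0:ℝ) = s i + r := by exact_mod_cast h
      have h2 : r = -(s i) := by linarith
      rw [h2]
  have hq : ∀ i, ordq ((7 : AlgebraicClosure ℚ_[7])^a / α i)
      = ((1 - s i : ℝ) : WithTop ℝ) := by
    intro i
    rw [div_eq_mul_inv, oqmul, hq1, hinv i, ← WithTop.coe_add]
    have e : (1:ℝ) + -s i = 1 - s i := by ring
    rw [e]
  have h2 : (Finset.univ.val.map (fun i => ((1 - s i : ℝ) : WithTop ℝ)))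
      = (Finset.univ.val.map (fun i => ((s i : ℝ) : WithTop ℝ))) := by
    calc Finset.univ.val.map (fun i => ((1 - s i : ℝ) : WithTop ℝ))
        = Finset.univ.val.map (fun i => ordq ((7 : AlgebraicClosure ℚ_[7])^a / α i)) := by
          apply Multiset.map_congr rfl
          intro i _
          rw [hq i]
      _ = ((Finset.univ.val.map α).map
            (fun x => ((7 : AlgebraicClosure ℚ_[7]) ^ a) / x)).map ordq := by
          rw [Multiset.map_map, Multiset.map_map]
          rfl
      _ = ((Finset.univ.val.map α)).map ordq := by rw [hsym]
      _ = Finset.univ.val.map (fun i => ((s i : ℝ) : WithTop ℝ)) := by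
          rw [Multiset.map_map]
          apply Multiset.map_congr rfl
          intro i _
          exact hs i
  have hsympair : 1 - s 3 = s 0 ∧ 1 - s 2 = s 1 := by
    have e1 : (Finset.univ.val.map (fun i => ((1 - s i : ℝ) : WithTop ℝ)))
        = ↑([1 - s 0, 1 - s 1, 1 - s 2, 1 - s 3].map (fun r : ℝ => (r : WithTop ℝ))) := rfl
    have e2 : (Finset.univ.val.map (fun i => ((s i : ℝ) : WithTop ℝ)))
        = ↑([s 0, s 1, s 2, s 3].map (fun r : ℝ => (r : WithTop ℝ))) := rfl
    rw [e1, e2] at h2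
    have h' : (↑([1 - s 0, 1 - s 1, 1 - s 2, 1 - s 3] : List ℝ) : Multiset ℝ)
        = (↑([s 0, s 1, s 2, s 3] : List ℝ) : Multiset ℝ) := by
      apply Multiset.map_injective (WithTop.coe_injective (α := ℝ))
      simpa [Multiset.map_coe] using h2
    have hperm : List.Perm [1 - s 0, 1 - s 1, 1 - s 2, 1 - s 3] [s 0, s 1, s 2, s 3] :=
      Multiset.coe_eq_coe.mp h'
    have hrev : ([1 - s 0, 1 - s 1, 1 - s 2, 1 - s 3] : List ℝ).reverse
        = [1 - s 3, 1 - s 2, 1 - s 1, 1 - s 0] := by simp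
    have hperm' : List.Perm [1 - s 3, 1 - s 2, 1 - s 1, 1 - s 0] [s 0, s 1, s 2, s 3] :=
      (hrev ▸ (List.reverse_perm _)).trans hperm
    have hsort1 : List.Pairwise (· ≤ ·) [1 - s 3, 1 - s 2, 1 - s 1, 1 - s 0] := by
      simp only [List.pairwise_cons, List.mem_cons, List.not_mem_nil, List.Pairwise.nil]
      norm_num
      refine ⟨⟨by linarith, by linarith, by linarith⟩, ⟨by linarith, by linarith⟩, by linarith⟩
    have hsort2 : List.Pairwise (· ≤ ·) [s 0, s 1, s 2, s 3] := by
      simp only [List.pairwise_cons, List.mem_cons, List.not_mem_nil, List.Pairwise.nil]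
      norm_num
      refine ⟨⟨by linarith, by linarith, by linarith⟩, ⟨by linarith, by linarith⟩, by linarith⟩
    have heq := hperm'.eq_of_pairwise' hsort1 hsort2
    simp only [List.cons.injEq, and_true] at heq
    exact ⟨heq.1, heq.2.1⟩
  obtain ⟨h03, h12sym⟩ := hsympair
  -- the coefficients
  have hpoly : ∏ i, (1 - C (α i) * X) =
      C 1 + C (-(α 0 + α 1 + α 2 + α 3)) * X
        + C (α 0*α 1 + α 0*α 2 + α 0*α 3 + α 1*α 2 + α 1*α 3 + α 2*α 3) * X^2
        + C (-(α 0*α 1*α 2 + α 0*α 1*α 3 + α 0*α 2*α 3 + α 1*α 2*α 3)) * X^3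
        + C (α 0*α 1*α 2*α 3) * X^4 := by
    rw [Fin.prod_univ_four]
    simp only [map_add, map_mul, map_neg, map_one]
    ring
  have hb0e : b 0 = 1 := by rw [hb, hpoly]; exact (coeff_explicit _ _ _ _).1
  have hb1e : b 1 = -(α 0 + α 1 + α 2 + α 3) := by
    rw [hb, hpoly]; exact (coeff_explicit _ _ _ _).2.1
  have hb2e : b 2 = α 0*α 1 + α 0*α 2 + α 0*α 3 + α 1*α 2 + α 1*α 3 + α 2*α 3 := by
    rw [hb, hpoly]; exact (coeff_explicit _ _ _ _).2.2.1
  have hb3e : b 3 = -(α 0*α 1*α 2 + α 0*α 1*α 3 + α 0*α 2*α 3 + α 1*α 2*α 3) := by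
    rw [hb, hpoly]; exact (coeff_explicit _ _ _ _).2.2.2.1
  have hb4e : b 4 = α 0*α 1*α 2*α 3 := by
    rw [hb, hpoly]; exact (coeff_explicit _ _ _ _).2.2.2.2
  -- valuations of the coefficients
  have hoα : ∀ i j : Fin 4, ordq (α i * α j) = ((s i + s j : ℝ) : WithTop ℝ) := by
    intro i j
    rw [oqmul, hs, hs, ← WithTop.coe_add]
  have hge : ∀ (c : ℝ) (i : Fin 4), c ≤ s i → ((c:ℝ) : WithTop ℝ) ≤ ordq (α i) := by
    intro c i h
    rw [hs i]
    exact_mod_cast h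
  have hgem : ∀ (c : ℝ) (i j : Fin 4), c ≤ s i + s j →
      ((c:ℝ) : WithTop ℝ) ≤ ordq (α i * α j) := by
    intro c i j h
    rw [hoα]
    exact_mod_cast h
  have hgetr : ∀ (c : ℝ) (i j k : Fin 4), c ≤ s i + s j + s k →
      ((c:ℝ) : WithTop ℝ) ≤ ordq (α i * α j * α k) := by
    intro c i j k h
    rw [oqmul, hoα, hs, ← WithTop.coe_add]
    exact_mod_cast h
  have hpts0 : ordq (b 0) = ((0:ℝ) : WithTop ℝ) := by
    rw [hb0e]; exact oq_one ordq oq0 oqmul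
  have hpts4 : ordq (b 4) = ((s 0 + s 1 + s 2 + s 3 : ℝ) : WithTop ℝ) := by
    rw [hb4e, oqmul, oqmul, oqmul, hs 0, hs 1, hs 2, hs 3]
    norm_cast
  have hpts1ge : ((s 0 : ℝ) : WithTop ℝ) ≤ ordq (b 1) := by
    rw [hb1e, oq_neg ordq oq0 oqmul]
    exact oq_add_ge ordq oqmin
      (oq_add_ge ordq oqmin
        (oq_add_ge ordq oqmin (hge _ 0 le_rfl) (hge _ 1 (hs0le 1)))
        (hge _ 2 (hs0le 2)))
      (hge _ 3 (hs0le 3))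
  have hpts2ge : ((s 0 + s 1 : ℝ) : WithTop ℝ) ≤ ordq (b 2) := by
    rw [hb2e]
    exact oq_add_ge ordq oqmin
      (oq_add_ge ordq oqmin
        (oq_add_ge ordq oqmin
          (oq_add_ge ordq oqmin
            (oq_add_ge ordq oqmin (hgem _ 0 1 le_rfl) (hgem _ 0 2 (by linarith)))
            (hgem _ 0 3 (by linarith)))
          (hgem _ 1 2 (by linarith)))
        (hgem _ 1 3 (by linarith)))
      (hgem _ 2 3 (by linarith))
  have hpts3ge : ((s 0 + s 1 + s 2 : ℝ) : WithTop ℝ) ≤ ordq (b 3) := by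
    rw [hb3e, oq_neg ordq oq0 oqmul]
    exact oq_add_ge ordq oqmin
      (oq_add_ge ordq oqmin
        (oq_add_ge ordq oqmin (hgetr _ 0 1 2 le_rfl) (hgetr _ 0 1 3 (by linarith)))
        (hgetr _ 0 2 3 (by linarith)))
      (hgetr _ 1 2 3 (by linarith))
  -- main argument: s 0 ≥ 1/2
  have hhalf : 1/2 ≤ s 0 := by
    by_contra hcon
    push_neg at hcon
    rcases eq_or_lt_of_le hs01 with h01 | h01
    · rcases eq_or_lt_of_le hs12 with h12 | h12
      · -- s0 = s1 = s2 : contradiction with s1 + s2 = 1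
        linarith
      · -- vertex at n = 2
        have hpts2 : ordq (b 2) = ((s 0 + s 1 : ℝ) : WithTop ℝ) := by
          rw [hb2e]
          have e : α 0*α 1 + α 0*α 2 + α 0*α 3 + α 1*α 2 + α 1*α 3 + α 2*α 3
              = α 0*α 1 + (α 0*α 2 + α 0*α 3 + α 1*α 2 + α 1*α 3 + α 2*α 3) := by ring
          rw [e]
          have hrest : ((s 0 + s 2 : ℝ) : WithTop ℝ)
              ≤ ordq (α 0*α 2 + α 0*α 3 + α 1*α 2 + α 1*α 3 + α 2*α 3) :=
            oq_add_ge ordq oqmin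
              (oq_add_ge ordq oqmin
                (oq_add_ge ordq oqmin
                  (oq_add_ge ordq oqmin (hgem _ 0 2 le_rfl) (hgem _ 0 3 (by linarith)))
                  (hgem _ 1 2 (by linarith)))
                (hgem _ 1 3 (by linarith)))
              (hgem _ 2 3 (by linarith))
          have hlt : ordq (α 0 * α 1) < ordq (α 0*α 2 + α 0*α 3 + α 1*α 2 + α 1*α 3 + α 2*α 3) := by
            rw [hoα 0 1]
            refine lt_of_lt_of_le ?_ hrest
            exact_mod_cast (by linarith : s 0 + s 1 < s 0 + s 2)
          rw [oq_dom ordq oq0 oqmul oqmin hlt, hoα 0 1]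
        have h56 : 5/6 < s 0 + s 1 := by
          have h := hb2
          rw [hpts2] at h
          exact_mod_cast h
        have hbelow : ∀ m, s 1 ≤ m → m ≤ s 2 → ∀ k : ℕ, k ≤ 4 →
            ((m * ((k:ℝ) - ((2:ℕ):ℝ)) + (s 0 + s 1) : ℝ) : WithTop ℝ) ≤ ordq (b k) := by
          intro m hm1 hm2 k hk
          interval_cases k
          · rw [hpts0]
            exact WithTop.coe_le_coe.mpr (by push_cast; linarith)
          · refine le_trans (WithTop.coe_le_coe.mpr ?_) hpts1ge
            push_cast; linarith
          · rw [hpts2]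
            exact WithTop.coe_le_coe.mpr (by push_cast; linarith)
          · refine le_trans (WithTop.coe_le_coe.mpr ?_) hpts3ge
            push_cast; linarith
          · rw [hpts4]
            exact WithTop.coe_le_coe.mpr (by push_cast; linarith)
        obtain ⟨hvtx, hval⟩ := np_helper (fun k => ordq (b k)) hpts0 _ hpts4 2
          (by norm_num) (by norm_num) (s 1) (s 2) (s 0 + s 1) h12 hbelow hpts2
        obtain ⟨z, hz⟩ := hvert 2 hvtx
        rw [hval] at hz
        have hz1 : (5:ℝ) < z := by linarith
        have hz2 : (z:ℝ) < 6 := by linarith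
        have hz1' : (5:ℤ) < z := by exact_mod_cast hz1
        have hz2' : z < 6 := by exact_mod_cast hz2
        omega
    · -- vertex at n = 1
      have hpts1 : ordq (b 1) = ((s 0 : ℝ) : WithTop ℝ) := by
        rw [hb1e, oq_neg ordq oq0 oqmul]
        have e : α 0 + α 1 + α 2 + α 3 = α 0 + (α 1 + α 2 + α 3) := by ring
        rw [e]
        have hrest : ((s 1 : ℝ) : WithTop ℝ) ≤ ordq (α 1 + α 2 + α 3) :=
          oq_add_ge ordq oqmin
            (oq_add_ge ordq oqmin (hge _ 1 le_rfl) (hge _ 2 (by linarith)))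
            (hge _ 3 (by linarith))
        have hlt : ordq (α 0) < ordq (α 1 + α 2 + α 3) := by
          rw [hs 0]
          refine lt_of_lt_of_le ?_ hrest
          exact_mod_cast h01
        rw [oq_dom ordq oq0 oqmul oqmin hlt, hs 0]
      have h512 : 5/12 < s 0 := by
        have h := hb1
        rw [hpts1] at h
        exact_mod_cast h
      have hbelow : ∀ m, s 0 ≤ m → m ≤ s 1 → ∀ k : ℕ, k ≤ 4 →
          ((m * ((k:ℝ) - ((1:ℕ):ℝ)) + s 0 : ℝ) : WithTop ℝ) ≤ ordq (b k) := by
        intro m hm1 hm2 k hk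
        interval_cases k
        · rw [hpts0]
          exact WithTop.coe_le_coe.mpr (by push_cast; linarith)
        · rw [hpts1]
          exact WithTop.coe_le_coe.mpr (by push_cast; linarith)
        · refine le_trans (WithTop.coe_le_coe.mpr ?_) hpts2ge
          push_cast; linarith
        · refine le_trans (WithTop.coe_le_coe.mpr ?_) hpts3ge
          push_cast; linarith
        · rw [hpts4]
          exact WithTop.coe_le_coe.mpr (by push_cast; linarith)
      obtain ⟨hvtx, hval⟩ := np_helper (fun k => ordq (b k)) hpts0 _ hpts4 1
        le_rfl (by norm_num) (s 0) (s 1) (s 0) h01 hbelow hpts1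
      obtain ⟨z, hz⟩ := hvert 1 hvtx
      rw [hval] at hz
      have hz1 : (5:ℝ) < 2 * z := by linarith
      have hz2 : 2 * (z:ℝ) < 6 := by linarith
      have hz1' : (5:ℤ) < 2 * z := by exact_mod_cast hz1
      have hz2' : (2:ℤ) * z < 6 := by exact_mod_cast hz2
      omega
  -- conclusion
  intro i
  rw [hs i]
  have hile : s i ≤ s 3 := by
    refine hmono' i 3 ?_
    have h3v : ((3:Fin 4)).val = 3 := rfl
    rw [Fin.le_def, h3v]
    have := i.isLt
    omega
  have hge0 : s 0 ≤ s i := hs0le i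
  have : s i = 1/2 := by linarith
  rw [this]

theorem newton_polygon_forces_supersingular_seven
    (v : AlgebraicClosure ℚ_[7] → WithTop ℝ)
    (hv0 : ∀ x, v x = ⊤ ↔ x = 0)
    (hv_mul : ∀ x y, v (x * y) = v x + v y)
    (hv_add : ∀ x y, min (v x) (v y) ≤ v (x + y))
    (hv_ext : ∀ x : ℚ_[7], x ≠ 0 →
      v (algebraMap ℚ_[7] (AlgebraicClosure ℚ_[7]) x) = ((x.valuation : ℝ) : WithTop ℝ))
    (a : ℕ) (ha : 0 < a)
    (α : Fin 4 → AlgebraicClosure ℚ_[7]) (hα : ∀ i, α i ≠ 0)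
    -- `ord_q := (1/a)·ord_7`
    (ordq : AlgebraicClosure ℚ_[7] → WithTop ℝ)
    (hordq : ∀ x, ordq x = WithTop.map (fun t => t / (a : ℝ)) (v x))
    -- the coefficients of `P(T) = ∏ᵢ (1 − αᵢ T)`
    (b : ℕ → AlgebraicClosure ℚ_[7])
    (hb : ∀ n, b n =
      (∏ i, (1 - Polynomial.C (α i) * Polynomial.X)).coeff n)
    -- (i) the multiset of the reciprocal roots is stable under `α ↦ q/α`
    (hsym : (Finset.univ.val.map α).map
        (fun x => ((7 : AlgebraicClosure ℚ_[7]) ^ a) / x) = Finset.univ.val.map α)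
    -- (ii) every vertex of the Newton polygon has ordinate a multiple of 1/6
    (hvert : ∀ n : ℕ, IsNPVertex 4 (fun k => ordq (b k)) n →
      ∃ z : ℤ, npVal 4 (fun k => ordq (b k)) (n : ℝ) = (z : ℝ) / 6)
    -- (iii)
    (hb1 : ((5 / 12 : ℝ) : WithTop ℝ) < ordq (b 1))
    (hb2 : ((5 / 6 : ℝ) : WithTop ℝ) < ordq (b 2)) :
    ∀ i, ordq (α i) = ((1 / 2 : ℝ) : WithTop ℝ) := by
  classical
  set f : Fin 4 → ℝ := fun i => (v (α i)).untopD 0 with hf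
  set σ : Equiv.Perm (Fin 4) := Tuple.sort f with hσ
  have hmono : Monotone fun i => (v ((α ∘ σ) i)).untopD 0 := Tuple.monotone_sort f
  have hmv : Finset.univ.val.map (α ∘ σ) = Finset.univ.val.map α := by
    have h1 : Finset.univ.val.map ⇑σ = Finset.univ.val := by
      have h := congrArg Finset.val (Finset.map_univ_equiv σ)
      simpa [Finset.map_val] using h
    rw [← Multiset.map_map, h1]
  have hb' : ∀ n, b n =
      (∏ i, (1 - Polynomial.C ((α ∘ σ) i) * Polynomial.X)).coeff n := by
    intro n
    rw [hb n]
    refine congrArg (fun p => Polynomial.coeff p n) ?_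
    exact (Equiv.prod_comp σ fun i => (1 - Polynomial.C (α i) * Polynomial.X)).symm
  have hsym' : (Finset.univ.val.map (α ∘ σ)).map
      (fun x => ((7 : AlgebraicClosure ℚ_[7]) ^ a) / x) = Finset.univ.val.map (α ∘ σ) := by
    rw [hmv]; exact hsym
  have key := aux_sorted v hv0 hv_mul hv_add hv_ext a ha (α ∘ σ) (fun i => hα _)
    ordq hordq b hb' hsym' hvert hb1 hb2 hmono
  intro i
  have h := key (σ.symm i)
  simpa [Function.comp, Equiv.apply_symm_apply] using h
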